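/- Let $A$ be a C*-algebra, let $x \in A$ be a nonzero contraction ($\|x\| \leq 1$), and let $b \in A_+$. Then for any $\varepsilon > 0$, $(x b x^* - \varepsilon)_+ \precsim x (b - \varepsilon)_+ x^* \precsim (b - \varepsilon)_+$. -/

import Mathlib

set_option maxHeartbeats 1000000

open Filter Topology Unitization
open scoped CStarAlgebra

/-- Cuntz subequivalence `a ≾ b` in a C*-algebra. -/
def CuntzLE {A : Type*} [NonUnitalCStarAlgebra A] (a b : A) : Prop :=
  ∃ v : ℕ → A, Tendsto (fun n => ‖a - v n * b * star (v n)‖) atTop (𝓝 0)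

/-- The cut-down `(a - ε)₊` via continuous functional calculus with `t ↦ max (t - ε) 0`. -/
noncomputable def posCut {A : Type*} [NonUnitalCStarAlgebra A] [PartialOrder A]
    [StarOrderedRing A] (a : A) (ε : ℝ) : A :=
  cfcₙ (fun t : ℝ => max (t - ε) 0) a

section Helpers

variable {A : Type*} [NonUnitalCStarAlgebra A] [PartialOrder A] [StarOrderedRing A]

/-- Rørdam-type perturbation lemma: if `0 ≤ e ≤ c + d` with `‖d‖ ≤ δ`, then `e` is
approximately a conjugate of `c`, up to `4 * δ`. -/
private lemma cuntz_key {e c d : A} (he : 0 ≤ e) (hc : 0 ≤ c) (hd : 0 ≤ d) {δ : ℝ}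
    (hδ : 0 < δ) (hdn : ‖d‖ ≤ δ) (hle : e ≤ c + d) :
    ∃ v : A, ‖e - v * c * star v‖ ≤ 4 * δ := by
  have hqc : ∀ t ∈ quasispectrum ℝ c, 0 ≤ t := quasispectrum_nonneg_of_nonneg c hc
  set φ : ℝ → ℝ := fun t => Real.sqrt t / (t + δ) with hφdef
  set ψ : ℝ → ℝ := fun t => t ^ 2 / (t + δ) ^ 2 with hψdef
  have hφ0 : φ 0 = 0 := by simp [hφdef]
  have hψ0 : ψ 0 = 0 := by simp [hψdef]
  have hφcont : ContinuousOn φ (quasispectrum ℝ c) := by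
    apply ContinuousOn.div Real.continuous_sqrt.continuousOn (by fun_prop)
    intro t ht
    have := hqc t ht
    positivity
  set s : A := cfcₙ Real.sqrt e with hsdef
  set w : A := cfcₙ φ c with hwdef
  have hsSA : IsSelfAdjoint s := cfcₙ_predicate _ e
  have hwSA : IsSelfAdjoint w := cfcₙ_predicate _ c
  refine ⟨s * w, ?_⟩
  -- `w * (c * w) = cfcₙ ψ c`
  have hq1 : cfcₙ (fun t : ℝ => t * φ t) c = c * w := by
    rw [cfcₙ_mul (f := fun t : ℝ => t) (g := φ) (a := c) (hf := by fun_prop) (hf0 := rfl)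
      (hg := hφcont) (hg0 := hφ0), cfcₙ_id' ℝ c]
  have hq2 : cfcₙ (fun t => φ t * (t * φ t)) c = w * (c * w) := by
    rw [cfcₙ_mul (f := φ) (g := fun t : ℝ => t * φ t) (a := c) (hf := hφcont) (hf0 := hφ0)
      (hg := continuousOn_id.mul hφcont) (hg0 := by simp [hφ0]), hq1]
  set q : A := cfcₙ ψ c with hqdef
  have hq : w * (c * w) = q := by
    rw [← hq2, hqdef]
    apply cfcₙ_congr
    intro t ht
    have ht' := hqc t ht
    have htδ : t + δ ≠ 0 := by positivity
    have hss : Real.sqrt t * Real.sqrt t = t := Real.mul_self_sqrt ht'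
    simp only [hφdef, hψdef]
    field_simp
    linear_combination t * hss
  have hexpr : s * w * c * star (s * w) = s * q * s := by
    rw [star_mul, hsSA.star_eq, hwSA.star_eq, ← hq]
    simp only [mul_assoc]
  rw [hexpr]
  -- move to the unitization
  set E : A⁺¹ := (e : A⁺¹) with hEdef
  set C : A⁺¹ := (c : A⁺¹) with hCdef
  set D : A⁺¹ := (d : A⁺¹) with hDdef
  have hEnn : 0 ≤ E := inr_nonneg_iff.mpr he
  have hCnn : 0 ≤ C := inr_nonneg_iff.mpr hc
  have hESA : IsSelfAdjoint E := .of_nonneg hEnn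
  have hCSA : IsSelfAdjoint C := .of_nonneg hCnn
  have hspecC : ∀ t ∈ spectrum ℝ C, 0 ≤ t := fun t ht => spectrum_nonneg_of_nonneg hCnn ht
  have hspecE : ∀ t ∈ spectrum ℝ E, 0 ≤ t := fun t ht => spectrum_nonneg_of_nonneg hEnn ht
  set S : A⁺¹ := cfc Real.sqrt E with hSdef
  set Q : A⁺¹ := cfc ψ C with hQdef
  have hs_inr : ((s : A) : A⁺¹) = S := by
    rw [hsdef, hSdef, real_cfcₙ_eq_cfc_inr e Real.sqrt (by simp)]
  have hq_inr : ((q : A) : A⁺¹) = Q := by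
    rw [hqdef, hQdef, real_cfcₙ_eq_cfc_inr c ψ hψ0]
  have hnorm0 : ‖e - s * q * s‖ = ‖E - S * Q * S‖ := by
    rw [← norm_inr (𝕜 := ℂ) (e - s * q * s), inr_sub ℂ, inr_mul ℂ, inr_mul ℂ, hs_inr, hq_inr]
  -- spectral computations in the unitization
  have hψ_le_one : ∀ t : ℝ, 0 ≤ t → ψ t ≤ 1 := by
    intro t ht
    rw [hψdef]
    rw [div_le_one (by positivity)]
    nlinarith
  have htδ' : ∀ t ∈ spectrum ℝ C, ((t + δ) ^ 2 : ℝ) ≠ 0 := by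
    intro t ht
    have := hspecC t ht
    positivity
  have hψcont : ContinuousOn ψ (spectrum ℝ C) :=
    ContinuousOn.div (by fun_prop) (by fun_prop) htδ'
  set m : ℝ → ℝ := fun t => 1 - ψ t with hmdef
  set r : ℝ → ℝ := fun t => Real.sqrt (1 - ψ t) with hrdef
  have hmcont : ContinuousOn m (spectrum ℝ C) := continuousOn_const.sub hψcont
  have hrcont : ContinuousOn r (spectrum ℝ C) := Real.continuous_sqrt.comp_continuousOn hmcont
  set R : A⁺¹ := cfc r C with hRdef
  set M : A⁺¹ := cfc m C with hMdef
  have hRSA : IsSelfAdjoint R := cfc_predicate _ C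
  have hSSA : IsSelfAdjoint S := cfc_predicate _ E
  have hSS : S * S = E := by
    rw [hSdef, ← cfc_mul (f := Real.sqrt) (g := Real.sqrt) (a := E) (hf := by fun_prop)
      (hg := by fun_prop)]
    rw [cfc_congr (g := fun t : ℝ => t) fun t ht => Real.mul_self_sqrt (hspecE t ht)]
    exact cfc_id' ℝ E
  have hM_eq : M = 1 - Q := by
    rw [hMdef, hmdef, cfc_sub (f := fun _ : ℝ => (1 : ℝ)) (g := ψ) (a := C)
      (hf := continuousOn_const) (hg := hψcont), cfc_const (1 : ℝ) C, map_one]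
  have hRR : R * R = M := by
    rw [hRdef, hMdef, ← cfc_mul (f := r) (g := r) (a := C) (hf := hrcont) (hg := hrcont)]
    apply cfc_congr
    intro t ht
    exact Real.mul_self_sqrt (by linarith [hψ_le_one t (hspecC t ht)])
  have key_eq : E - S * Q * S = S * M * S := by
    rw [hM_eq, mul_sub, mul_one, sub_mul, hSS]
  have hz : S * M * S = star (R * S) * (R * S) := by
    rw [star_mul, hRSA.star_eq, hSSA.star_eq, ← hRR]
    simp only [mul_assoc]
  have hz' : R * E * R = (R * S) * star (R * S) := by
    rw [star_mul, hRSA.star_eq, hSSA.star_eq, ← hSS]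
    simp only [mul_assoc]
  have hnorm2 : ‖S * M * S‖ = ‖R * E * R‖ := by
    rw [hz, hz', CStarRing.norm_star_mul_self, CStarRing.norm_self_mul_star]
  -- order estimates
  have hEC : E ≤ C + D := by
    have : ((c + d : A) : A⁺¹) = C + D := by rw [inr_add ℂ]
    rw [← this, hEdef]
    exact (inr_le_iff e (c + d) (.of_nonneg he)
      (.of_nonneg (add_nonneg hc hd))).mpr hle
  have hconj : R * E * R ≤ R * (C + D) * R := hRSA.conjugate_le_conjugate hEC
  have hRER_nonneg : 0 ≤ R * E * R := hRSA.conjugate_nonneg hEnn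
  have h5 : ‖R * E * R‖ ≤ ‖R * C * R‖ + ‖R * D * R‖ := by
    calc ‖R * E * R‖ ≤ ‖R * (C + D) * R‖ :=
          CStarAlgebra.norm_le_norm_of_nonneg_of_le hRER_nonneg hconj
      _ = ‖R * C * R + R * D * R‖ := by rw [mul_add, add_mul]
      _ ≤ _ := norm_add_le _ _
  have hRCR : R * (C * R) = cfc (fun t => r t * (t * r t)) C := by
    rw [cfc_mul (f := r) (g := fun t : ℝ => t * r t) (a := C) (hf := hrcont)
      (hg := continuousOn_id.mul hrcont),
      cfc_mul (f := fun t : ℝ => t) (g := r) (a := C) (hf := continuousOn_id) (hg := hrcont),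
      cfc_id' ℝ C]
  have hRCR_norm : ‖R * C * R‖ ≤ 3 * δ := by
    rw [mul_assoc, hRCR]
    apply norm_cfc_le (by positivity)
    intro t ht
    have ht' := hspecC t ht
    have h1ψ : 0 ≤ 1 - ψ t := by linarith [hψ_le_one t ht']
    have hrr : r t * r t = 1 - ψ t := Real.mul_self_sqrt h1ψ
    have hval : r t * (t * r t) = (1 - ψ t) * t := by rw [← hrr]; ring
    rw [Real.norm_eq_abs, hval, abs_of_nonneg (mul_nonneg h1ψ ht')]
    have hpos : (0 : ℝ) < (t + δ) ^ 2 := by positivity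
    rcases le_or_gt t (3 * δ) with hcase | hcase
    · have hψnn : 0 ≤ ψ t := by rw [hψdef]; positivity
      nlinarith
    · have hψt : ψ t * t = t ^ 3 / (t + δ) ^ 2 := by rw [hψdef]; ring
      have hsplit2 : (1 - ψ t) * t = t - ψ t * t := by ring
      rw [hsplit2, hψt, sub_le_iff_le_add, ← sub_le_iff_le_add', le_div_iff₀ hpos]
      nlinarith [mul_nonneg hδ.le (sq_nonneg t), mul_nonneg (mul_nonneg hδ.le hδ.le) ht',
        mul_nonneg (mul_nonneg hδ.le hδ.le) hδ.le]
  have hRn : ‖R‖ ≤ 1 := by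
    apply norm_cfc_le zero_le_one
    intro t ht
    have ht' := hspecC t ht
    rw [hrdef, Real.norm_eq_abs, abs_of_nonneg (Real.sqrt_nonneg _)]
    have : 0 ≤ ψ t := by rw [hψdef]; positivity
    exact Real.sqrt_le_one.2 (by linarith)
  have hDn : ‖D‖ ≤ δ := by rw [hDdef, norm_inr]; exact hdn
  have hRDR : ‖R * D * R‖ ≤ δ := by
    calc ‖R * D * R‖ ≤ ‖R * D‖ * ‖R‖ := norm_mul_le _ _
      _ ≤ ‖R‖ * ‖D‖ * ‖R‖ := by
          gcongr
          exact norm_mul_le _ _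
      _ ≤ 1 * δ * 1 := by
          have h1 : ‖R‖ * ‖D‖ ≤ 1 * δ := mul_le_mul hRn hDn (norm_nonneg _) zero_le_one
          exact mul_le_mul h1 hRn (norm_nonneg _) (by positivity)
      _ = δ := by ring
  calc ‖e - s * q * s‖ = ‖E - S * Q * S‖ := hnorm0
    _ = ‖S * M * S‖ := by rw [key_eq]
    _ = ‖R * E * R‖ := hnorm2
    _ ≤ ‖R * C * R‖ + ‖R * D * R‖ := h5
    _ ≤ 3 * δ + δ := add_le_add hRCR_norm hRDR
    _ = 4 * δ := by ring

end Helpers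

/-- For a nonzero contraction `x` and positive `b`:
`(x b x* - ε)₊ ≾ x (b - ε)₊ x* ≾ (b - ε)₊`. -/
theorem stmt_2 {A : Type*} [NonUnitalCStarAlgebra A] [PartialOrder A] [StarOrderedRing A]
    (x : A) (hx : x ≠ 0) (hx1 : ‖x‖ ≤ 1) (b : A) (hb : 0 ≤ b) (ε : ℝ) (hε : 0 < ε) :
    CuntzLE (posCut (x * b * star x) ε) (x * posCut b ε * star x) ∧
      CuntzLE (x * posCut b ε * star x) (posCut b ε) := by
  constructor
  · -- `(x b x* - ε)₊ ≾ x (b - ε)₊ x*`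
    set a := x * b * star x with hadef
    set c := x * posCut b ε * star x with hcdef
    have ha : 0 ≤ a := star_right_conjugate_nonneg hb x
    have hpc : 0 ≤ posCut b ε := cfcₙ_nonneg fun t _ => le_max_right _ _
    have hccc : 0 ≤ c := star_right_conjugate_nonneg hpc x
    have hqa : ∀ t ∈ quasispectrum ℝ a, 0 ≤ t := quasispectrum_nonneg_of_nonneg a ha
    set e := posCut a ε with hedef
    have he : 0 ≤ e := cfcₙ_nonneg fun t _ => le_max_right _ _
    set rb := b - posCut b ε with hrbdef
    have hrb_eq : cfcₙ (fun t : ℝ => t - max (t - ε) 0) b = rb := by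
      rw [cfcₙ_sub (f := fun t : ℝ => t) (g := fun t : ℝ => max (t - ε) 0) (a := b)
        (hf := by fun_prop) (hf0 := rfl)
        (hg := ((continuous_id.sub continuous_const).max continuous_const).continuousOn)
        (hg0 := max_eq_right (by linarith)), cfcₙ_id' ℝ b]
      rfl
    have hrbSA : IsSelfAdjoint rb := (IsSelfAdjoint.of_nonneg hb).sub (cfcₙ_predicate _ b)
    have hrb_norm : ‖rb‖ ≤ ε := by
      rw [← hrb_eq]
      apply norm_cfcₙ_le
      intro t ht
      have ht' := quasispectrum_nonneg_of_nonneg b hb t ht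
      rw [Real.norm_eq_abs, abs_le]
      rcases le_total t ε with h | h
      · rw [max_eq_right (by linarith)]
        constructor <;> linarith
      · rw [max_eq_left (by linarith)]
        constructor <;> linarith
    have hacrb : a - c = x * rb * star x := by
      rw [hadef, hcdef, hrbdef]
      noncomm_ring
    have main : ∀ δ : ℝ, 0 < δ → 2 * δ ≤ ε → ∃ v : A, ‖e - v * c * star v‖ ≤ 4 * δ := by
      intro δ hδ hδε
      set hf : ℝ → ℝ := fun t => min 1 (max ((t - (ε - δ)) / δ) 0) with hhfdef
      set gf : ℝ → ℝ := fun t => min δ (max (t - (ε - 2 * δ)) 0) with hgfdef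
      have hhf_cont : Continuous hf :=
        continuous_const.min (((continuous_id.sub continuous_const).div_const δ).max
          continuous_const)
      have hgf_cont : Continuous gf :=
        continuous_const.min ((continuous_id.sub continuous_const).max continuous_const)
      have hhf0 : hf 0 = 0 := by
        rw [hhfdef]
        simp only
        rw [max_eq_right (div_nonpos_of_nonpos_of_nonneg (by linarith) hδ.le),
          min_eq_right zero_le_one]
      have hgf0 : gf 0 = 0 := by
        rw [hgfdef]
        simp only
        rw [max_eq_right (by linarith), min_eq_right hδ.le]
      have hhf_mem : ∀ t : ℝ, 0 ≤ hf t ∧ hf t ≤ 1 := fun t =>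
        ⟨le_min zero_le_one (le_max_right _ _), min_le_left _ _⟩
      set h := cfcₙ hf a with hhdef
      set d := cfcₙ gf a with hddef
      have hhSA : IsSelfAdjoint h := cfcₙ_predicate _ a
      have hd0 : 0 ≤ d := cfcₙ_nonneg fun t _ => le_min hδ.le (le_max_right _ _)
      have hdn : ‖d‖ ≤ δ := by
        apply norm_cfcₙ_le
        intro t _
        rw [Real.norm_eq_abs, abs_of_nonneg (le_min hδ.le (le_max_right _ _))]
        exact min_le_left _ _
      -- pointwise inequality
      have scal : ∀ t : ℝ, 0 ≤ t →
          max (t - ε) 0 ≤ hf t * (t * hf t) - ε * (hf t * hf t) + gf t := by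
        intro t ht
        obtain ⟨hH0, hH1⟩ := hhf_mem t
        rcases le_or_gt t (ε - δ) with h1 | h1
        · have hhf_t : hf t = 0 := by
            rw [hhfdef]
            simp only
            rw [max_eq_right (div_nonpos_of_nonpos_of_nonneg (by linarith) hδ.le),
              min_eq_right zero_le_one]
          have hgf_nonneg : 0 ≤ gf t := le_min hδ.le (le_max_right _ _)
          have hmax0 : max (t - ε) 0 = 0 := max_eq_right (by linarith)
          rw [hhf_t, hmax0]
          simpa using hgf_nonneg
        · have hgf_t : gf t = δ :=
            min_eq_left (le_trans (by linarith) (le_max_left (t - (ε - 2 * δ)) 0))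
          rcases le_or_gt t ε with h2 | h2
          · have hmax0 : max (t - ε) 0 = 0 := max_eq_right (by linarith)
            rw [hmax0, hgf_t]
            have hH2 : hf t * hf t ≤ 1 := mul_le_one₀ hH1 hH0 hH1
            nlinarith [mul_nonneg hH0 hH0]
          · have hhf_t : hf t = 1 := by
              rw [hhfdef]
              simp only
              exact min_eq_left (le_trans ((one_le_div hδ).mpr (by linarith))
                (le_max_left _ _))
            rw [hhf_t, hgf_t]
            have : 1 * (t * 1) - ε * (1 * 1) + δ = t - ε + δ := by ring
            rw [this]
            exact max_le (by linarith) (by linarith)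
      have hmono : e ≤ cfcₙ (fun t => hf t * (t * hf t) - ε * (hf t * hf t) + gf t) a := by
        rw [hedef, posCut]
        exact cfcₙ_mono (fun t ht => scal t (hqa t ht))
          (((continuous_id.sub continuous_const).max continuous_const).continuousOn)
          ((((hhf_cont.mul (continuous_id.mul hhf_cont)).sub
            (continuous_const.mul (hhf_cont.mul hhf_cont))).add hgf_cont).continuousOn)
          (max_eq_right (by linarith)) (by simp [hhf0, hgf0])
      -- cfcₙ algebra
      have e1 : cfcₙ (fun t : ℝ => t * hf t) a = a * h := by
        rw [cfcₙ_mul (f := fun t : ℝ => t) (g := hf) (a := a) (hf := by fun_prop) (hf0 := rfl)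
          (hg := hhf_cont.continuousOn) (hg0 := hhf0), cfcₙ_id' ℝ a]
      have e2 : cfcₙ (fun t => hf t * (t * hf t)) a = h * (a * h) := by
        rw [cfcₙ_mul (f := hf) (g := fun t : ℝ => t * hf t) (a := a)
          (hf := hhf_cont.continuousOn) (hf0 := hhf0)
          (hg := (continuous_id.mul hhf_cont).continuousOn) (hg0 := by simp [hhf0]), e1]
      have e3 : cfcₙ (fun t => hf t * hf t) a = h * h := by
        rw [cfcₙ_mul (f := hf) (g := hf) (a := a) (hf := hhf_cont.continuousOn) (hf0 := hhf0)
          (hg := hhf_cont.continuousOn) (hg0 := hhf0)]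
      have e4 : cfcₙ (fun t => ε * (hf t * hf t)) a = ε • (h * h) := by
        rw [cfcₙ_const_mul ε (fun t => hf t * hf t) a
          ((hhf_cont.mul hhf_cont).continuousOn) (by simp [hhf0]), e3]
      have e5 : cfcₙ (fun t => hf t * (t * hf t) - ε * (hf t * hf t)) a
          = h * (a * h) - ε • (h * h) := by
        rw [cfcₙ_sub (f := fun t => hf t * (t * hf t)) (g := fun t => ε * (hf t * hf t)) (a := a)
          (hf := (hhf_cont.mul (continuous_id.mul hhf_cont)).continuousOn)
          (hf0 := by simp [hhf0])
          (hg := (continuous_const.mul (hhf_cont.mul hhf_cont)).continuousOn)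
          (hg0 := by simp [hhf0]), e2, e4]
      have hsplit : cfcₙ (fun t => hf t * (t * hf t) - ε * (hf t * hf t) + gf t) a
          = h * (a * h) - ε • (h * h) + d := by
        rw [cfcₙ_add (f := fun t => hf t * (t * hf t) - ε * (hf t * hf t)) (g := gf) (a := a)
          (hf := ((hhf_cont.mul (continuous_id.mul hhf_cont)).sub
            (continuous_const.mul (hhf_cont.mul hhf_cont))).continuousOn)
          (hf0 := by simp [hhf0])
          (hg := hgf_cont.continuousOn) (hg0 := hgf0), e5]
      -- conjugation estimate
      have hd1 : h * a * h - h * c * h = h * x * rb * (star x * h) := by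
        have : h * a * h - h * c * h = h * (a - c) * h := by noncomm_ring
        rw [this, hacrb]
        simp only [mul_assoc]
      have hstarhx : star (h * x) = star x * h := by rw [star_mul, hhSA.star_eq]
      have hd2 : h * x * rb * (star x * h) ≤ ‖rb‖ • (h * x * (star x * h)) := by
        have := CStarAlgebra.star_right_conjugate_le_norm_smul (a := h * x) (b := rb) hrbSA
        rwa [hstarhx] at this
      have hhxx_nonneg : 0 ≤ h * x * (star x * h) := by
        have := mul_star_self_nonneg (h * x)
        rwa [hstarhx] at this
      have hd4 : h * x * (star x * h) ≤ ‖x * star x‖ • (h * h) := by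
        have h1 := CStarAlgebra.star_right_conjugate_le_norm_smul (a := h) (b := x * star x)
          (IsSelfAdjoint.mul_star_self x)
        rw [hhSA.star_eq] at h1
        calc h * x * (star x * h) = h * (x * star x) * h := by simp only [mul_assoc]
          _ ≤ _ := h1
      have hxsn : ‖x * star x‖ ≤ 1 := by
        rw [CStarRing.norm_self_mul_star]
        nlinarith [norm_nonneg x]
      have hhh0 : 0 ≤ h * h := by
        have := star_mul_self_nonneg h
        rwa [hhSA.star_eq] at this
      have hd5 : h * x * (star x * h) ≤ h * h := by
        calc h * x * (star x * h) ≤ ‖x * star x‖ • (h * h) := hd4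
          _ ≤ (1 : ℝ) • (h * h) := smul_le_smul_of_nonneg_right hxsn hhh0
          _ = h * h := one_smul _ _
      have hhxh : h * a * h ≤ h * c * h + ε • (h * h) := by
        have step : h * a * h - h * c * h ≤ ε • (h * h) := by
          rw [hd1]
          calc h * x * rb * (star x * h) ≤ ‖rb‖ • (h * x * (star x * h)) := hd2
            _ ≤ ε • (h * x * (star x * h)) :=
                smul_le_smul_of_nonneg_right hrb_norm hhxx_nonneg
            _ ≤ ε • (h * h) := smul_le_smul_of_nonneg_left hd5 hε.le
        have h8 := sub_le_iff_le_add.mp step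
        rwa [add_comm] at h8
      have hecd : e ≤ h * c * h + d := by
        have h6 := hmono
        rw [hsplit] at h6
        have h7 : h * (a * h) = h * a * h := (mul_assoc h a h).symm
        rw [h7] at h6
        calc e ≤ h * a * h - ε • (h * h) + d := h6
          _ ≤ h * c * h + ε • (h * h) - ε • (h * h) + d := by
              have := sub_le_sub_right (α := A) hhxh (ε • (h * h))
              exact add_le_add_left this d
          _ = h * c * h + d := by abel
      have hc2 : 0 ≤ h * c * h := by
        have := star_right_conjugate_nonneg hccc h
        rwa [hhSA.star_eq] at this
      obtain ⟨w, hw⟩ := cuntz_key he hc2 hd0 hδ hdn hecd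
      refine ⟨w * h, ?_⟩
      have hfin : w * h * c * star (w * h) = w * (h * c * h) * star w := by
        rw [star_mul, hhSA.star_eq]
        simp only [mul_assoc]
      rw [hfin]
      exact hw
    -- assemble the sequence
    have hseq : ∀ n : ℕ, ∃ v : A, ‖e - v * c * star v‖ ≤ 4 * (ε / (2 * ((n : ℝ) + 1))) := by
      intro n
      apply main
      · positivity
      · have hn : (0 : ℝ) < (n : ℝ) + 1 := by positivity
        have h1 : 2 * (ε / (2 * ((n : ℝ) + 1))) = ε / ((n : ℝ) + 1) := by
          field_simp
        rw [h1]
        refine div_le_self hε.le ?_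
        have h2 : (0 : ℝ) ≤ (n : ℝ) := Nat.cast_nonneg n
        linarith
    choose v hv using hseq
    refine ⟨v, ?_⟩
    apply squeeze_zero (fun n => norm_nonneg _) hv
    have heq : (fun n : ℕ => 4 * (ε / (2 * ((n : ℝ) + 1)))) =
        fun n : ℕ => (2 * ε) * (1 / ((n : ℝ) + 1)) := by
      funext n
      have hn : ((n : ℝ) + 1) ≠ 0 := by positivity
      field_simp
      ring
    rw [heq]
    simpa using tendsto_one_div_add_atTop_nhds_zero_nat.const_mul (2 * ε)
  · refine ⟨fun _ => x, ?_⟩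
    simp only [sub_self, norm_zero]
    exact tendsto_const_nhds
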